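/- The number 5040 is the smallest positive integer whose period is exactly 6, where the period of n is the least k such that d^k(n) = 2. -/

import Mathlib

set_option maxRecDepth 100000
set_option maxHeartbeats 4000000

/-- The number-of-divisors function. -/
def d (n : ℕ) : ℕ := n.divisors.card

/-- The period of `n`: the least `k ≥ 1` with `d^[k] n = 2`. -/
noncomputable def period (n : ℕ) : ℕ := sInf {k | 1 ≤ k ∧ d^[k] n = 2}

/-- Binary-splitting count of the divisors of `n` lying in `[a, a+len)`,
with fuel `f` (correct whenever `len ≤ 2^f`). Written with `Nat.rec` and
kernel-accelerated operations so that `decide!` is fast. -/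
def cntI (n : ℕ) (f : ℕ) : ℕ → ℕ → ℕ :=
  Nat.rec (motive := fun _ => ℕ → ℕ → ℕ)
    (fun a len => cond (Nat.beq len 0) 0 (cond (Nat.beq (Nat.mod n a) 0) 1 0))
    (fun _ ih a len =>
      cond (Nat.ble len 1)
        (cond (Nat.beq len 0) 0 (cond (Nat.beq (Nat.mod n a) 0) 1 0))
        (Nat.add (ih a (Nat.div len 2))
          (ih (Nat.add a (Nat.div len 2)) (Nat.sub len (Nat.div len 2))))) f

/-- Binary-splitting check that every `m ∈ [a, a+len)` has at most 28 divisors in `[1, 71]`. -/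
def allok (f : ℕ) : ℕ → ℕ → Bool :=
  Nat.rec (motive := fun _ => ℕ → ℕ → Bool)
    (fun a len => Nat.beq len 0 || Nat.ble (cntI a 7 1 71) 28)
    (fun _ ih a len =>
      cond (Nat.ble len 1)
        (Nat.beq len 0 || Nat.ble (cntI a 7 1 71) 28)
        (ih a (Nat.div len 2) && ih (Nat.add a (Nat.div len 2)) (Nat.sub len (Nat.div len 2)))) f

lemma cntI_zero (n a len : ℕ) :
    cntI n 0 a len = cond (Nat.beq len 0) 0 (cond (Nat.beq (Nat.mod n a) 0) 1 0) := rfl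

lemma cntI_succ (n f a len : ℕ) :
    cntI n (f+1) a len =
      cond (Nat.ble len 1)
        (cond (Nat.beq len 0) 0 (cond (Nat.beq (Nat.mod n a) 0) 1 0))
        (Nat.add (cntI n f a (Nat.div len 2))
          (cntI n f (Nat.add a (Nat.div len 2)) (Nat.sub len (Nat.div len 2)))) := rfl

lemma allok_zero (a len : ℕ) :
    allok 0 a len = (Nat.beq len 0 || Nat.ble (cntI a 7 1 71) 28) := rfl

lemma allok_succ (f a len : ℕ) :
    allok (f+1) a len =
      cond (Nat.ble len 1)
        (Nat.beq len 0 || Nat.ble (cntI a 7 1 71) 28)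
        (allok f a (Nat.div len 2) &&
          allok f (Nat.add a (Nat.div len 2)) (Nat.sub len (Nat.div len 2))) := rfl

lemma count_base (n a len : ℕ) (h : len ≤ 1) :
    cond (Nat.beq len 0) 0 (cond (Nat.beq (Nat.mod n a) 0) 1 0)
      = ((Finset.Ico a (a+len)).filter (· ∣ n)).card := by
  interval_cases len
  · simp
  · show cond (Nat.beq (n % a) 0) 1 0 = _
    rw [Finset.Ico_add_one_right_eq_Icc, Finset.Icc_self, Finset.filter_singleton]
    cases hb : Nat.beq (n % a) 0 with
    | true =>
      have hm : n % a = 0 := Nat.eq_of_beq_eq_true hb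
      rw [if_pos ((Nat.dvd_iff_mod_eq_zero).mpr hm)]
      simp
    | false =>
      have hm : ¬ n % a = 0 := Nat.ne_of_beq_eq_false hb
      rw [if_neg (fun h => hm ((Nat.dvd_iff_mod_eq_zero).mp h))]
      simp

lemma cntI_eq (n : ℕ) : ∀ f a len, len ≤ 2^f →
    cntI n f a len = ((Finset.Ico a (a+len)).filter (· ∣ n)).card := by
  intro f
  induction f with
  | zero =>
    intro a len hlen
    simp only [pow_zero] at hlen
    rw [cntI_zero]
    exact count_base n a len hlen
  | succ f ih =>
    intro a len hlen
    rw [cntI_succ]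
    cases hb : Nat.ble len 1 with
    | true =>
      exact count_base n a len (Nat.le_of_ble_eq_true hb)
    | false =>
      have hlen1 : ¬ len ≤ 1 := by
        intro h
        rw [← Nat.ble_eq] at h
        rw [hb] at h
        exact Bool.false_ne_true h
      have hp : 2^(f+1) = 2^f + 2^f := by rw [pow_succ]; ring
      rw [hp] at hlen
      show cntI n f a (len/2) + cntI n f (a + len/2) (len - len/2) = _
      rw [ih a (len/2) (by omega), ih (a + len/2) (len - len/2) (by omega)]
      have hE : a + len/2 + (len - len/2) = a + len := by omega
      rw [hE,
        ← Finset.Ico_union_Ico_eq_Ico (a := a) (b := a + len/2) (c := a + len) (by omega) (by omega),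
        Finset.filter_union,
        Finset.card_union_of_disjoint
          (Finset.disjoint_filter_filter (Finset.Ico_disjoint_Ico_consecutive _ _ _))]

lemma allok_sound : ∀ f a len, len ≤ 2^f → allok f a len = true →
    ∀ n, a ≤ n → n < a + len → cntI n 7 1 71 ≤ 28 := by
  have base : ∀ a len, (Nat.beq len 0 || Nat.ble (cntI a 7 1 71) 28) = true →
      ∀ n, a ≤ n → n < a + len → len ≤ 1 → cntI n 7 1 71 ≤ 28 := by
    intro a len hok n h1 h2 hl
    interval_cases len
    · omega
    · have hn : n = a := by omega
      subst hn
      rcases Bool.or_eq_true_iff.mp hok with h | h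
      · exact absurd (Nat.eq_of_beq_eq_true h) one_ne_zero
      · exact Nat.le_of_ble_eq_true h
  intro f
  induction f with
  | zero =>
    intro a len hlen hok n h1 h2
    simp only [pow_zero] at hlen
    exact base a len (by rwa [allok_zero] at hok) n h1 h2 hlen
  | succ f ih =>
    intro a len hlen hok n h1 h2
    rw [allok_succ] at hok
    cases hb : Nat.ble len 1 with
    | true =>
      rw [hb] at hok
      exact base a len hok n h1 h2 (Nat.le_of_ble_eq_true hb)
    | false =>
      rw [hb] at hok
      have hlen1 : ¬ len ≤ 1 := by
        intro h
        rw [← Nat.ble_eq] at h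
        rw [hb] at h
        exact Bool.false_ne_true h
      have hp : 2^(f+1) = 2^f + 2^f := by rw [pow_succ]; ring
      rw [hp] at hlen
      have hok' : allok f a (len/2) = true ∧ allok f (a + len/2) (len - len/2) = true :=
        Bool.and_eq_true_iff.mp hok
      by_cases hn : n < a + len/2
      · exact ih a (len/2) (by omega) hok'.1 n h1 hn
      · exact ih (a + len/2) (len - len/2) (by omega) hok'.2 n (by omega) (by omega)

lemma d_eq_cntI (n f : ℕ) (h : n ≤ 2^f) : d n = cntI n f 1 n := by
  rw [cntI_eq n f 1 n h, add_comm 1 n]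
  rfl

lemma d_le_pair (n : ℕ) (h0 : 0 < n) (hn : n ≤ 5041) :
    d n ≤ 2 * ((Finset.Ico 1 72).filter (· ∣ n)).card := by
  classical
  set A := (Finset.Ico 1 72).filter (· ∣ n) with hA
  have hsplit := Finset.card_filter_add_card_filter_not
    (s := n.divisors) (p := fun k => k ≤ 71)
  have h1 : (n.divisors.filter (fun k => k ≤ 71)).card ≤ A.card := by
    apply Finset.card_le_card
    intro k hk
    simp only [Finset.mem_filter, Nat.mem_divisors] at hk
    simp only [hA, Finset.mem_filter, Finset.mem_Ico]
    have hkpos : 0 < k := Nat.pos_of_mem_divisors (Nat.mem_divisors.mpr hk.1)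
    exact ⟨⟨hkpos, by omega⟩, hk.1.1⟩
  have h2 : (n.divisors.filter (fun k => ¬ k ≤ 71)).card ≤ A.card := by
    apply Finset.card_le_card_of_injOn (fun k => n / k)
    · intro k hk
      simp only [Finset.mem_coe, Finset.mem_filter, Nat.mem_divisors] at hk
      obtain ⟨⟨hdvd, -⟩, hgt⟩ := hk
      simp only [hA, Finset.mem_coe, Finset.mem_filter, Finset.mem_Ico]
      refine ⟨⟨Nat.div_pos (Nat.le_of_dvd h0 hdvd) (by omega), ?_⟩, Nat.div_dvd_of_dvd hdvd⟩
      have ha : n / k ≤ n / 72 := Nat.div_le_div_left (by omega) (by omega)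
      have hbb : n / 72 ≤ 5041 / 72 := Nat.div_le_div_right hn
      omega
    · intro k1 hk1 k2 hk2 heq
      simp only [Finset.coe_filter, Set.mem_setOf_eq, Nat.mem_divisors] at hk1 hk2
      have e1 : n / (n / k1) = k1 := Nat.div_div_self hk1.1.1 (by omega)
      have e2 : n / (n / k2) = k2 := Nat.div_div_self hk2.1.1 (by omega)
      simp only at heq
      rw [← e1, ← e2, heq]
  calc d n = (n.divisors.filter (fun k => k ≤ 71)).card
      + (n.divisors.filter (fun k => ¬ k ≤ 71)).card := by rw [hsplit]; rfl
    _ ≤ 2 * A.card := by omega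

lemma the_scan : allok 13 1 5039 = true := by decide +kernel

lemma d_small (n : ℕ) (h0 : 0 < n) (h : n < 5040) : d n ≤ 56 := by
  have hA : cntI n 7 1 71 ≤ 28 :=
    allok_sound 13 1 5039 (by norm_num) the_scan n h0 (by omega)
  have hEq : cntI n 7 1 71 = ((Finset.Ico 1 72).filter (· ∣ n)).card :=
    cntI_eq n 7 1 71 (by norm_num)
  have := d_le_pair n h0 (by omega)
  omega

lemma period_eq_of {n k : ℕ} (hk : 1 ≤ k) (h2 : d^[k] n = 2)
    (hmin : ∀ j, 1 ≤ j → j < k → d^[j] n ≠ 2) : period n = k := by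
  have : IsLeast {k | 1 ≤ k ∧ d^[k] n = 2} k := by
    refine ⟨⟨hk, h2⟩, fun j hj => ?_⟩
    by_contra h
    push_neg at h
    exact hmin j hj.1 h hj.2
  exact this.csInf_eq

lemma key_small : ∀ m ∈ Finset.range 60, d^[5] m = 2 → d^[4] m = 2 := by decide

theorem fiveThousandForty_least_period_six :
    IsLeast {n : ℕ | 0 < n ∧ period n = 6} 5040 := by
  constructor
  · refine ⟨by norm_num, ?_⟩
    have e1 : d 5040 = 60 := by rw [d_eq_cntI 5040 13 (by norm_num)]; decide +kernel
    have e2 : d 60 = 12 := by decide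
    have e3 : d 12 = 6 := by decide
    have e4 : d 6 = 4 := by decide
    have e5 : d 4 = 3 := by decide
    have e6 : d 3 = 2 := by decide
    have i1 : d^[1] 5040 = 60 := by simpa using e1
    have i2 : d^[2] 5040 = 12 := by
      rw [show (2:ℕ) = 1 + 1 from rfl, Function.iterate_succ_apply', i1, e2]
    have i3 : d^[3] 5040 = 6 := by
      rw [show (3:ℕ) = 2 + 1 from rfl, Function.iterate_succ_apply', i2, e3]
    have i4 : d^[4] 5040 = 4 := by
      rw [show (4:ℕ) = 3 + 1 from rfl, Function.iterate_succ_apply', i3, e4]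
    have i5 : d^[5] 5040 = 3 := by
      rw [show (5:ℕ) = 4 + 1 from rfl, Function.iterate_succ_apply', i4, e5]
    have i6 : d^[6] 5040 = 2 := by
      rw [show (6:ℕ) = 5 + 1 from rfl, Function.iterate_succ_apply', i5, e6]
    refine period_eq_of (by norm_num) i6 ?_
    intro j hj1 hj6
    interval_cases j
    · rw [i1]; norm_num
    · rw [i2]; norm_num
    · rw [i3]; norm_num
    · rw [i4]; norm_num
    · rw [i5]; norm_num
  · rintro n ⟨hpos, hper⟩
    by_contra hge
    push_neg at hge
    have hS : {k | 1 ≤ k ∧ d^[k] n = 2}.Nonempty := by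
      by_contra h
      rw [Set.not_nonempty_iff_eq_empty] at h
      have : period n = 0 := by rw [period, h, Nat.sInf_empty]
      omega
    have h6 : 6 ∈ {k | 1 ≤ k ∧ d^[k] n = 2} := by
      have := Nat.sInf_mem hS
      rwa [show sInf {k | 1 ≤ k ∧ d^[k] n = 2} = period n from rfl, hper] at this
    have h5 : 5 ∉ {k | 1 ≤ k ∧ d^[k] n = 2} := by
      apply Nat.notMem_of_lt_sInf
      rw [show sInf {k | 1 ≤ k ∧ d^[k] n = 2} = period n from rfl, hper]
      norm_num
    have hd6 : d^[6] n = 2 := h6.2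
    have hd5 : d^[5] n ≠ 2 := fun h => h5 ⟨by norm_num, h⟩
    have hm : d n ≤ 56 := d_small n hpos hge
    have h6' : d^[5] (d n) = 2 := by
      rw [← Function.iterate_succ_apply]
      exact hd6
    have h5' : d^[4] (d n) = 2 := key_small (d n) (Finset.mem_range.mpr (by omega)) h6'
    apply hd5
    rw [show (5:ℕ) = 4 + 1 from rfl, Function.iterate_succ_apply]
    exact h5'
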